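/- arXiv:1708.05397 — 2 statements merged into one kernel-verified Lean document; each statement's English description precedes it below -/
import Mathlib

section
/- Let h be a holomorphic function on an open set Ω ⊆ ℂ^m belonging to the class 𝒯^m with weight μ. Identify ℂ^m with ℝ^{2m} via z_k = x_k + i·y_k and set u(x,y) = Re h(z) and v(x,y) = Im h(z). Then u and v are harmonic (Δu = Δv = 0), and Δ₁u = −μ̃·u and Δ₁v = −μ̃·v on the corresponding open subset of ℝ^{2m}, where μ̃(x,y) = μ(x+iy); that is, u and v are eigenfunctions of the 1-Laplacian with the same weight. -/
noncomputable section

/-- The partial derivative `∂f/∂xᵢ` of a function on `ℝ^N`. -/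
noncomputable def pd {N : ℕ} (f : (Fin N → ℝ) → ℝ) (i : Fin N) (x : Fin N → ℝ) : ℝ :=
  fderiv ℝ f x (Pi.single i 1)

/-- The Laplacian `Δf = Σᵢ ∂²f/∂xᵢ²`. -/
noncomputable def lap {N : ℕ} (f : (Fin N → ℝ) → ℝ) (x : Fin N → ℝ) : ℝ :=
  ∑ i, pd (pd f i) i x

/-- The ∞-Laplacian `Δ_∞ f = Σᵢⱼ (∂f/∂xᵢ)(∂f/∂xⱼ)(∂²f/∂xᵢ∂xⱼ)`. -/
noncomputable def infLap {N : ℕ} (f : (Fin N → ℝ) → ℝ) (x : Fin N → ℝ) : ℝ :=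
  ∑ i, ∑ j, pd f i x * pd f j x * pd (pd f j) i x

/-- The 1-Laplacian `Δ₁f = |∇f|²Δf − Δ_∞f`. -/
noncomputable def lap1 {N : ℕ} (f : (Fin N → ℝ) → ℝ) (x : Fin N → ℝ) : ℝ :=
  (∑ i, pd f i x ^ 2) * lap f x - infLap f x

/-- The complex partial derivative `h_{zᵢ}` of a function on `ℂ^m`. -/
noncomputable def cpd {m : ℕ} (h : (Fin m → ℂ) → ℂ) (i : Fin m) (z : Fin m → ℂ) : ℂ :=
  fderiv ℂ h z (Pi.single i 1)

/-- The identification `ℝ^(m+m) ≅ ℂ^m`, `(x, y) ↦ x + i·y` componentwise. -/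
noncomputable def emb {m : ℕ} (w : Fin (m + m) → ℝ) : Fin m → ℂ :=
  fun k => (w (Fin.castAdd m k) : ℂ) + (w (Fin.natAdd m k) : ℂ) * Complex.I


section AuxiliaryLemmas

open Complex Metric Real


lemma rep_lemma {E : Type*} [NormedAddCommGroup E] [NormedSpace ℂ E] {f : E → ℂ} {Ω : Set E}
    (hΩ : IsOpen Ω) (hf : DifferentiableOn ℂ f Ω) (x : E) (u : E) {ρ : ℝ} (hρ : 0 < ρ)
    (hmem : ∀ t : ℂ, ‖t‖ ≤ ρ → x + t • u ∈ Ω) :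
    fderiv ℂ f x u = cauchyPowerSeries (fun t => f (x + t • u)) 0 ρ 1 (fun _ => 1) := by
  lift ρ to NNReal using hρ.le with ρnn
  set g : ℂ → ℂ := fun t => f (x + t • u) with hg
  have hgd : DifferentiableOn ℂ g (closedBall (0:ℂ) ρnn) := by
    intro t ht
    have h1 : x + t • u ∈ Ω := hmem t (by simpa [mem_closedBall, dist_zero_right] using ht)
    have h2 : DifferentiableAt ℂ (fun t : ℂ => x + t • u) t :=
      (differentiableAt_id.smul_const u).const_add x
    exact ((hf.differentiableAt (hΩ.mem_nhds h1)).comp t h2).differentiableWithinAt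
  have hρ' : (0 : NNReal) < ρnn := by exact_mod_cast hρ
  have hps := hgd.hasFPowerSeriesOnBall hρ'
  have hx : x ∈ Ω := by simpa using hmem 0 (by simpa using hρ.le)
  have h2 : HasFDerivAt f (fderiv ℂ f x) x := (hf.differentiableAt (hΩ.mem_nhds hx)).hasFDerivAt
  have h1 : HasDerivAt (fun t : ℂ => x + t • u) u 0 := by
    simpa using ((hasDerivAt_id (0:ℂ)).smul_const u).const_add x
  have h2' : HasFDerivAt f (fderiv ℂ f x) ((fun t : ℂ => x + t • u) 0) := by simpa using h2
  have hder : HasDerivAt g (fderiv ℂ f x u) 0 := h2'.comp_hasDerivAt 0 h1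
  rw [← hder.deriv, hps.hasFPowerSeriesAt.deriv]

lemma norm_fderiv_le_of_bound {E : Type*} [NormedAddCommGroup E] [NormedSpace ℂ E] {f : E → ℂ}
    {Ω : Set E} (hΩ : IsOpen Ω) (hf : DifferentiableOn ℂ f Ω) {x : E} {r M : ℝ} (hr : 0 < r)
    (hsub : closedBall x r ⊆ Ω) (hM : ∀ y ∈ closedBall x r, ‖f y‖ ≤ M) :
    ‖fderiv ℂ f x‖ ≤ M / r := by
  have hM0 : 0 ≤ M := le_trans (norm_nonneg _) (hM x (mem_closedBall_self hr.le))
  refine ContinuousLinearMap.opNorm_le_bound _ (by positivity) fun u => ?_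
  rcases eq_or_ne u 0 with rfl | hu
  · simp
  have hu0 : 0 < ‖u‖ := norm_pos_iff.2 hu
  set ρ := r / ‖u‖ with hρdef
  have hρ : 0 < ρ := div_pos hr hu0
  have hmem : ∀ t : ℂ, ‖t‖ ≤ ρ → x + t • u ∈ Ω := by
    intro t ht
    apply hsub
    have : ‖t • u‖ ≤ r := by
      rw [norm_smul]
      calc ‖t‖ * ‖u‖ ≤ ρ * ‖u‖ := by
            exact mul_le_mul_of_nonneg_right ht (norm_nonneg u)
        _ = r := by rw [hρdef]; field_simp
    simp only [mem_closedBall, dist_eq_norm, add_sub_cancel_left]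
    exact this
  have hgc : Continuous fun θ => f (x + circleMap 0 ρ θ • u) := by
    rw [continuous_iff_continuousAt]
    intro θ
    have hmem' : x + circleMap 0 ρ θ • u ∈ Ω := hmem _ (by simp [norm_circleMap_zero, abs_of_pos hρ])
    have hpath : ContinuousAt (fun θ : ℝ => x + circleMap 0 ρ θ • u) θ := by fun_prop
    exact ContinuousAt.comp (g := f) (f := fun θ : ℝ => x + circleMap 0 ρ θ • u)
      ((hf.differentiableAt (hΩ.mem_nhds hmem')).continuousAt) hpath
  rw [rep_lemma hΩ hf x u hρ hmem]
  have h1 : ‖cauchyPowerSeries (fun t => f (x + t • u)) 0 ρ 1 (fun _ => (1:ℂ))‖ ≤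
      ‖cauchyPowerSeries (fun t => f (x + t • u)) 0 ρ 1‖ := by
    simpa using ContinuousMultilinearMap.le_opNorm (cauchyPowerSeries (fun t => f (x + t • u)) 0 ρ 1) (fun _ => (1:ℂ))
  have h2 := norm_cauchyPowerSeries_le (fun t => f (x + t • u)) 0 ρ 1
  have h3 : (∫ θ in (0:ℝ)..2 * π, ‖f (x + circleMap 0 ρ θ • u)‖) ≤ 2 * π * M := by
    have := intervalIntegral.integral_mono_on (μ := MeasureTheory.volume)
      (f := fun θ => ‖f (x + circleMap 0 ρ θ • u)‖) (g := fun _ => M)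
      Real.two_pi_pos.le (hgc.norm.intervalIntegrable _ _) (intervalIntegrable_const)
      (fun θ _ => hM _ (by
        have : ‖circleMap 0 ρ θ • u‖ ≤ r := by
          rw [norm_smul]
          simp only [norm_circleMap_zero, abs_of_pos hρ]
          rw [hρdef]; field_simp; exact le_rfl
        simpa [mem_closedBall, dist_eq_norm] using this))
    simpa [intervalIntegral.integral_const] using this
  calc ‖cauchyPowerSeries (fun t => f (x + t • u)) 0 ρ 1 (fun _ => (1:ℂ))‖
      ≤ ((2 * π)⁻¹ * ∫ θ in (0:ℝ)..2 * π, ‖f (x + circleMap 0 ρ θ • u)‖) * |ρ|⁻¹ ^ 1 := by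
        refine h1.trans ?_
        simpa [circleMap] using h2
    _ ≤ ((2 * π)⁻¹ * (2 * π * M)) * |ρ|⁻¹ ^ 1 := by
        have h4 : (0:ℝ) ≤ |ρ|⁻¹ ^ 1 := by positivity
        have h5 : (0:ℝ) ≤ (2 * π)⁻¹ := by positivity
        exact mul_le_mul_of_nonneg_right (mul_le_mul_of_nonneg_left h3 h5) h4
    _ = M / r * ‖u‖ := by
        rw [abs_of_pos hρ, hρdef]
        have : (2*π)⁻¹ * (2*π*M) = M := by field_simp [Real.pi_ne_zero]
        rw [this]
        field_simp

lemma diff_fderiv_apply {m : ℕ} {Ω : Set (Fin m → ℂ)} (hΩ : IsOpen Ω)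
    {f : (Fin m → ℂ) → ℂ} (hf : DifferentiableOn ℂ f Ω) (v : Fin m → ℂ)
    {z₀ : Fin m → ℂ} (hz : z₀ ∈ Ω) :
    DifferentiableAt ℂ (fun z => fderiv ℂ f z v) z₀ := by
  obtain ⟨ε, hε, hball⟩ := Metric.isOpen_iff.1 hΩ z₀ hz
  set R := ε / 4 with hRdef
  have hR : 0 < R := by positivity
  have hsub3 : closedBall z₀ (3 * R) ⊆ Ω := by
    intro y hy
    exact hball (lt_of_le_of_lt (mem_closedBall.1 hy) (by rw [hRdef]; linarith))
  have hsub2 : closedBall z₀ (2 * R) ⊆ Ω :=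
    (closedBall_subset_closedBall (by linarith)).trans hsub3
  obtain ⟨M, hM⟩ := (isCompact_closedBall z₀ (3 * R)).exists_bound_of_continuousOn
    (hf.continuousOn.mono hsub3)
  have hM0 : 0 ≤ M := le_trans (norm_nonneg _) (hM z₀ (mem_closedBall_self (by positivity)))
  have hfd : ∀ y ∈ closedBall z₀ (2 * R), ‖fderiv ℂ f y‖ ≤ M / R := by
    intro y hy
    refine norm_fderiv_le_of_bound hΩ hf hR ?_ ?_
    · refine (closedBall_subset_closedBall' ?_).trans hsub3
      have := mem_closedBall.1 hy
      linarith
    · intro w hw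
      refine hM w (closedBall_subset_closedBall' ?_ hw)
      have := mem_closedBall.1 hy
      linarith
  set ρ := R / (‖v‖ + 1) with hρdef
  have hρ : 0 < ρ := by positivity
  have hρv : ρ * ‖v‖ ≤ R := by
    rw [hρdef, div_mul_eq_mul_div, div_le_iff₀ (by positivity)]
    nlinarith [norm_nonneg v]
  have hmem2 : ∀ z ∈ Metric.ball z₀ R, ∀ t : ℂ, ‖t‖ ≤ ρ →
      z + t • v ∈ closedBall z₀ (2 * R) := by
    intro z hz' t ht
    have h1 : dist (z + t • v) z ≤ R := by
      rw [dist_eq_norm, add_sub_cancel_left, norm_smul]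
      calc ‖t‖ * ‖v‖ ≤ ρ * ‖v‖ := mul_le_mul_of_nonneg_right ht (norm_nonneg v)
        _ ≤ R := hρv
    have h2 : dist z z₀ < R := mem_ball.1 hz'
    have := (dist_triangle (z + t • v) z z₀)
    rw [mem_closedBall]
    linarith
  -- the integrand and its z-derivative
  set F : (Fin m → ℂ) → ℝ → ℂ := fun z θ =>
    deriv (circleMap 0 ρ) θ • ((circleMap 0 ρ θ)⁻¹ • ((circleMap 0 ρ θ)⁻¹ •
      f (z + circleMap 0 ρ θ • v))) with hFdef
  set F' : (Fin m → ℂ) → ℝ → ((Fin m → ℂ) →L[ℂ] ℂ) := fun z θ =>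
    deriv (circleMap 0 ρ) θ • ((circleMap 0 ρ θ)⁻¹ • ((circleMap 0 ρ θ)⁻¹ •
      fderiv ℂ f (z + circleMap 0 ρ θ • v))) with hF'def
  have habs : ∀ θ : ℝ, ‖circleMap 0 ρ θ‖ = ρ := by
    intro θ; rw [norm_circleMap_zero, abs_of_pos hρ]
  have hne : ∀ θ : ℝ, circleMap 0 ρ θ ≠ 0 := fun θ => circleMap_ne_center hρ.ne'
  have hpathmem : ∀ z ∈ Metric.ball z₀ R, ∀ θ : ℝ, z + circleMap 0 ρ θ • v ∈ Ω := by
    intro z hz' θ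
    exact hsub2 (hmem2 z hz' _ (le_of_eq (habs θ)))
  have hFcont : ∀ z ∈ Metric.ball z₀ R, Continuous (F z) := by
    intro z hz'
    have c1 : Continuous fun θ => deriv (circleMap 0 ρ) θ := by
      simp only [deriv_circleMap]
      exact (continuous_circleMap 0 ρ).mul continuous_const
    have c2 : Continuous fun θ => (circleMap 0 ρ θ)⁻¹ :=
      (continuous_circleMap 0 ρ).inv₀ hne
    have c3 : Continuous fun θ => f (z + circleMap 0 ρ θ • v) := by
      rw [continuous_iff_continuousAt]
      intro θ
      have hpath : ContinuousAt (fun θ : ℝ => z + circleMap 0 ρ θ • v) θ := by fun_prop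
      exact ContinuousAt.comp (g := f) (f := fun θ : ℝ => z + circleMap 0 ρ θ • v)
        ((hf.differentiableAt (hΩ.mem_nhds (hpathmem z hz' θ))).continuousAt) hpath
    exact c1.smul (c2.smul (c2.smul c3))
  -- representation of the derivative as the integral
  have hrep : ∀ z ∈ Metric.ball z₀ R, fderiv ℂ f z v =
      (2 * π * I)⁻¹ • ∫ θ in (0:ℝ)..2 * π, F z θ := by
    intro z hz'
    have hmemΩ : ∀ t : ℂ, ‖t‖ ≤ ρ → z + t • v ∈ Ω :=
      fun t ht => hsub2 (hmem2 z hz' t ht)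
    rw [rep_lemma hΩ hf z v hρ hmemΩ, cauchyPowerSeries_apply]
    congr 1
    rw [circleIntegral]
    refine intervalIntegral.integral_congr fun θ _ => ?_
    simp [sub_zero, pow_one, one_div, hFdef]
  -- differentiation under the integral sign
  have hdiff := intervalIntegral.hasFDerivAt_integral_of_dominated_of_fderiv_le
    (𝕜 := ℂ) (μ := MeasureTheory.volume) (F := F) (F' := F') (x₀ := z₀)
    (a := (0:ℝ)) (b := 2 * π) (bound := fun _ => ρ⁻¹ * (M / R)) (Metric.ball_mem_nhds z₀ hR)
    (by
      filter_upwards [Metric.ball_mem_nhds z₀ hR] with z hz'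
      exact (hFcont z hz').aestronglyMeasurable)
    ((hFcont z₀ (mem_ball_self hR)).intervalIntegrable _ _)
    (by
      have c1 : Continuous fun θ => deriv (circleMap 0 ρ) θ := by
        simp only [deriv_circleMap]
        exact (continuous_circleMap 0 ρ).mul continuous_const
      have c2 : Continuous fun θ => (circleMap 0 ρ θ)⁻¹ :=
        (continuous_circleMap 0 ρ).inv₀ hne
      have m1 : Measurable fun θ => fderiv ℂ f (z₀ + circleMap 0 ρ θ • v) :=
        (measurable_fderiv ℂ f).comp (by fun_prop)
      have hsmul : ∀ (s : ℝ → ℂ) (G : ℝ → ((Fin m → ℂ) →L[ℂ] ℂ)), Measurable s →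
          Measurable G → Measurable (fun θ => s θ • G θ) := fun s G hs hG =>
        (continuous_smul.measurable).comp (hs.prodMk hG)
      exact (hsmul _ _ c1.measurable (hsmul _ _ c2.measurable
        (hsmul _ _ c2.measurable m1))).aestronglyMeasurable)
    (by
      refine MeasureTheory.ae_of_all _ fun θ _ => fun z hz' => ?_
      have hnorm : ‖F' z θ‖ = ρ * (ρ⁻¹ * (ρ⁻¹ * ‖fderiv ℂ f (z + circleMap 0 ρ θ • v)‖)) := by
        have n1 : ∀ (c : ℂ) (D : (Fin m → ℂ) →L[ℂ] ℂ), ‖c • D‖ = ‖c‖ * ‖D‖ :=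
          fun c D => norm_smul c D
        rw [hF'def]
        simp only [deriv_circleMap, n1, norm_mul, norm_inv, Complex.norm_I, habs, mul_one]
      rw [hnorm]
      have hb := hfd _ (hmem2 z hz' _ (le_of_eq (habs θ)))
      calc ρ * (ρ⁻¹ * (ρ⁻¹ * ‖fderiv ℂ f (z + circleMap 0 ρ θ • v)‖))
          = ρ⁻¹ * ‖fderiv ℂ f (z + circleMap 0 ρ θ • v)‖ := by
            field_simp
        _ ≤ ρ⁻¹ * (M / R) := mul_le_mul_of_nonneg_left hb (by positivity)
      )
    (intervalIntegrable_const)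
    (by
      refine MeasureTheory.ae_of_all _ fun θ _ => fun z hz' => ?_
      have hbase : HasFDerivAt f (fderiv ℂ f (z + circleMap 0 ρ θ • v))
          (z + circleMap 0 ρ θ • v) :=
        (hf.differentiableAt (hΩ.mem_nhds (hpathmem z hz' θ))).hasFDerivAt
      have htrans : HasFDerivAt (fun z : Fin m → ℂ => z + circleMap 0 ρ θ • v)
          (ContinuousLinearMap.id ℂ (Fin m → ℂ)) z := (hasFDerivAt_id z).add_const _
      have hcomp := hbase.comp z htrans
      rw [ContinuousLinearMap.comp_id] at hcomp
      exact (hcomp.fun_const_smul _).fun_const_smul _ |>.fun_const_smul _)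
  have hΨ : DifferentiableAt ℂ (fun z => (2 * π * I)⁻¹ •
      ∫ θ in (0:ℝ)..2 * π, F z θ) z₀ :=
    hdiff.differentiableAt.fun_const_smul _
  refine hΨ.congr_of_eventuallyEq ?_
  filter_upwards [Metric.ball_mem_nhds z₀ hR] with z hz'
  exact hrep z hz'

noncomputable def embL (m : ℕ) : (Fin (m + m) → ℝ) →L[ℝ] (Fin m → ℂ) :=
  ContinuousLinearMap.pi fun k =>
    Complex.ofRealCLM.comp (ContinuousLinearMap.proj (Fin.castAdd m k)) +
    Complex.I • (Complex.ofRealCLM.comp (ContinuousLinearMap.proj (Fin.natAdd m k)))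

lemma emb_eq (m : ℕ) : (emb : (Fin (m + m) → ℝ) → (Fin m → ℂ)) = ⇑(embL m) := by
  funext w k
  simp [emb, embL, Complex.real_smul]
  ring

lemma embL_single_castAdd (m : ℕ) (k : Fin m) :
    embL m (Pi.single (Fin.castAdd m k) 1) = (1 : ℂ) • (Pi.single k 1 : Fin m → ℂ) := by
  funext l
  have e1 : ((Pi.single (Fin.castAdd m k) (1:ℝ) : Fin (m+m) → ℝ)) (Fin.castAdd m l) = if l = k then 1 else 0 := by
    rw [Pi.single_apply]
    refine if_congr ?_ rfl rfl
    constructor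
    · intro hh; ext; have := congrArg Fin.val hh; simpa using this
    · intro hh; subst hh; rfl
  have e2 : ((Pi.single (Fin.castAdd m k) (1:ℝ) : Fin (m+m) → ℝ)) (Fin.natAdd m l) = 0 := by
    rw [Pi.single_apply, if_neg]
    intro hh
    have := congrArg Fin.val hh
    simp only [Fin.coe_natAdd, Fin.coe_castAdd] at this
    omega
  show (Complex.ofRealCLM ((Pi.single (Fin.castAdd m k) (1:ℝ) : Fin (m+m) → ℝ) (Fin.castAdd m l))) +
      Complex.I • (Complex.ofRealCLM ((Pi.single (Fin.castAdd m k) (1:ℝ) : Fin (m+m) → ℝ) (Fin.natAdd m l))) = _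
  rw [e1, e2]
  by_cases hlk : l = k <;> simp [hlk, Pi.single_apply]

lemma embL_single_natAdd (m : ℕ) (k : Fin m) :
    embL m (Pi.single (Fin.natAdd m k) 1) = Complex.I • (Pi.single k 1 : Fin m → ℂ) := by
  funext l
  have e1 : ((Pi.single (Fin.natAdd m k) (1:ℝ) : Fin (m+m) → ℝ)) (Fin.natAdd m l) = if l = k then 1 else 0 := by
    rw [Pi.single_apply]
    refine if_congr ?_ rfl rfl
    constructor
    · intro hh; ext; have := congrArg Fin.val hh
      simp only [Fin.coe_natAdd] at this; omega
    · intro hh; subst hh; rfl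
  have e2 : ((Pi.single (Fin.natAdd m k) (1:ℝ) : Fin (m+m) → ℝ)) (Fin.castAdd m l) = 0 := by
    rw [Pi.single_apply, if_neg]
    intro hh
    have := congrArg Fin.val hh
    simp only [Fin.coe_natAdd, Fin.coe_castAdd] at this
    omega
  show (Complex.ofRealCLM ((Pi.single (Fin.natAdd m k) (1:ℝ) : Fin (m+m) → ℝ) (Fin.castAdd m l))) +
      Complex.I • (Complex.ofRealCLM ((Pi.single (Fin.natAdd m k) (1:ℝ) : Fin (m+m) → ℝ) (Fin.natAdd m l))) = _
  rw [e1, e2]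
  by_cases hlk : l = k <;> simp [hlk, Pi.single_apply]

lemma pd_re_comp {m : ℕ} (G : (Fin m → ℂ) → ℂ) (x : Fin (m + m) → ℝ)
    (hG : DifferentiableAt ℂ G (emb x)) (i : Fin (m + m)) :
    pd (fun y => (G (emb y)).re) i x = ((fderiv ℂ G (emb x)) (embL m (Pi.single i 1))).re := by
  have h1 := hG.hasFDerivAt.restrictScalars ℝ
  rw [show emb x = embL m x from congrFun (emb_eq m) x] at h1
  have h0 : HasFDerivAt (fun y => G (embL m y))
      (((fderiv ℂ G (embL m x)).restrictScalars ℝ).comp (embL m)) x :=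
    h1.comp x (embL m).hasFDerivAt
  have h2 : HasFDerivAt (fun y => (G (embL m y)).re)
      (Complex.reCLM.comp (((fderiv ℂ G (embL m x)).restrictScalars ℝ).comp (embL m))) x :=
    Complex.reCLM.hasFDerivAt.comp x h0
  show fderiv ℝ (fun y => (G (emb y)).re) x (Pi.single i 1) = _
  simp only [emb_eq]
  rw [h2.fderiv]
  simp

lemma pd_im_comp {m : ℕ} (G : (Fin m → ℂ) → ℂ) (x : Fin (m + m) → ℝ)
    (hG : DifferentiableAt ℂ G (emb x)) (i : Fin (m + m)) :
    pd (fun y => (G (emb y)).im) i x = ((fderiv ℂ G (emb x)) (embL m (Pi.single i 1))).im := by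
  have h1 := hG.hasFDerivAt.restrictScalars ℝ
  rw [show emb x = embL m x from congrFun (emb_eq m) x] at h1
  have h0 : HasFDerivAt (fun y => G (embL m y))
      (((fderiv ℂ G (embL m x)).restrictScalars ℝ).comp (embL m)) x :=
    h1.comp x (embL m).hasFDerivAt
  have h2 : HasFDerivAt (fun y => (G (embL m y)).im)
      (Complex.imCLM.comp (((fderiv ℂ G (embL m x)).restrictScalars ℝ).comp (embL m))) x :=
    Complex.imCLM.hasFDerivAt.comp x h0
  show fderiv ℝ (fun y => (G (emb y)).im) x (Pi.single i 1) = _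
  simp only [emb_eq]
  rw [h2.fderiv]
  simp


end AuxiliaryLemmas

/-- If `h` is holomorphic on an open `Ω ⊆ ℂ^m` and belongs to the class `𝒯^m` with weight `μ`,
then `u = Re h` and `v = Im h` are harmonic and satisfy `Δ₁u = −μ̃·u`, `Δ₁v = −μ̃·v` on the
corresponding open subset of `ℝ^(2m)`, i.e. they are eigenfunctions of the 1-Laplacian with
the same weight. -/
theorem re_im_eigenfunctions {m : ℕ} (Ω : Set (Fin m → ℂ)) (hΩ : IsOpen Ω)
    (h : (Fin m → ℂ) → ℂ) (hh : DifferentiableOn ℂ h Ω)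
    (μ : (Fin m → ℂ) → ℝ)
    (hT : ∀ z ∈ Ω, ∑ i, ∑ j,
        (starRingEnd ℂ) (cpd (cpd h j) i z) * cpd h i z * cpd h j z = (μ z : ℂ) * h z) :
    ∀ w : Fin (m + m) → ℝ, emb w ∈ Ω →
      lap (fun x => (h (emb x)).re) w = 0 ∧
      lap (fun x => (h (emb x)).im) w = 0 ∧
      lap1 (fun x => (h (emb x)).re) w = -μ (emb w) * (h (emb w)).re ∧
      lap1 (fun x => (h (emb x)).im) w = -μ (emb w) * (h (emb w)).im := by
  intro w hw
  have hUopen : IsOpen (emb ⁻¹' Ω : Set (Fin (m + m) → ℝ)) := by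
    rw [emb_eq]; exact hΩ.preimage (embL m).continuous
  have hwU : w ∈ (emb ⁻¹' Ω : Set (Fin (m + m) → ℝ)) := hw
  have hd1 : ∀ x ∈ (emb ⁻¹' Ω : Set (Fin (m + m) → ℝ)), DifferentiableAt ℂ h (emb x) :=
    fun x hx => hh.differentiableAt (hΩ.mem_nhds hx)
  have hd2 : ∀ l : Fin m, DifferentiableAt ℂ (cpd h l) (emb w) :=
    fun l => diff_fderiv_apply hΩ hh (Pi.single l 1) hw
  -- first derivatives
  have hu1 : ∀ x ∈ (emb ⁻¹' Ω : Set (Fin (m + m) → ℝ)), ∀ (c : ℂ) (k : Fin m) (i : Fin (m + m)),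
      embL m (Pi.single i 1) = c • (Pi.single k 1 : Fin m → ℂ) →
      pd (fun y => (h (emb y)).re) i x = (c * cpd h k (emb x)).re := by
    intro x hx c k i hi
    rw [pd_re_comp h x (hd1 x hx) i, hi, (fderiv ℂ h (emb x)).map_smul, smul_eq_mul]
    rfl
  have hv1 : ∀ x ∈ (emb ⁻¹' Ω : Set (Fin (m + m) → ℝ)), ∀ (c : ℂ) (k : Fin m) (i : Fin (m + m)),
      embL m (Pi.single i 1) = c • (Pi.single k 1 : Fin m → ℂ) →
      pd (fun y => (h (emb y)).im) i x = (c * cpd h k (emb x)).im := by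
    intro x hx c k i hi
    rw [pd_im_comp h x (hd1 x hx) i, hi, (fderiv ℂ h (emb x)).map_smul, smul_eq_mul]
    rfl
  -- second derivatives
  have hu2 : ∀ (c d : ℂ) (k l : Fin m) (i j : Fin (m + m)),
      embL m (Pi.single i 1) = c • (Pi.single k 1 : Fin m → ℂ) →
      embL m (Pi.single j 1) = d • (Pi.single l 1 : Fin m → ℂ) →
      pd (pd (fun y => (h (emb y)).re) j) i w = (c * (d * cpd (cpd h l) k (emb w))).re := by
    intro c d k l i j hi hj
    have hev : pd (fun y => (h (emb y)).re) j =ᶠ[nhds w] fun x => (d * cpd h l (emb x)).re := by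
      filter_upwards [hUopen.mem_nhds hwU] with x hx
      exact hu1 x hx d l j hj
    have step1 : pd (pd (fun y => (h (emb y)).re) j) i w
        = pd (fun x => (d * cpd h l (emb x)).re) i w := by
      show fderiv ℝ _ w _ = fderiv ℝ _ w _
      rw [hev.fderiv_eq]
    rw [step1]
    have hG : DifferentiableAt ℂ (fun z' => d * cpd h l z') (emb w) := (hd2 l).const_mul d
    rw [pd_re_comp (fun z' => d * cpd h l z') w hG i, fderiv_const_mul (hd2 l) d, hi]
    rw [ContinuousLinearMap.smul_apply, (fderiv ℂ (cpd h l) (emb w)).map_smul]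
    show (d * (c * fderiv ℂ (cpd h l) (emb w) (Pi.single k 1))).re = _
    congr 1
    show d * (c * cpd (cpd h l) k (emb w)) = _
    ring
  have hv2 : ∀ (c d : ℂ) (k l : Fin m) (i j : Fin (m + m)),
      embL m (Pi.single i 1) = c • (Pi.single k 1 : Fin m → ℂ) →
      embL m (Pi.single j 1) = d • (Pi.single l 1 : Fin m → ℂ) →
      pd (pd (fun y => (h (emb y)).im) j) i w = (c * (d * cpd (cpd h l) k (emb w))).im := by
    intro c d k l i j hi hj
    have hev : pd (fun y => (h (emb y)).im) j =ᶠ[nhds w] fun x => (d * cpd h l (emb x)).im := by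
      filter_upwards [hUopen.mem_nhds hwU] with x hx
      exact hv1 x hx d l j hj
    have step1 : pd (pd (fun y => (h (emb y)).im) j) i w
        = pd (fun x => (d * cpd h l (emb x)).im) i w := by
      show fderiv ℝ _ w _ = fderiv ℝ _ w _
      rw [hev.fderiv_eq]
    rw [step1]
    have hG : DifferentiableAt ℂ (fun z' => d * cpd h l z') (emb w) := (hd2 l).const_mul d
    rw [pd_im_comp (fun z' => d * cpd h l z') w hG i, fderiv_const_mul (hd2 l) d, hi]
    rw [ContinuousLinearMap.smul_apply, (fderiv ℂ (cpd h l) (emb w)).map_smul]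
    show (d * (c * fderiv ℂ (cpd h l) (emb w) (Pi.single k 1))).im = _
    congr 1
    show d * (c * cpd (cpd h l) k (emb w)) = _
    ring
  have ecast := embL_single_castAdd m
  have enat := embL_single_natAdd m
  -- harmonicity of the real part
  have hlapu : lap (fun x => (h (emb x)).re) w = 0 := by
    show (∑ i, pd (pd (fun x => (h (emb x)).re) i) i w) = 0
    rw [Fin.sum_univ_add, ← Finset.sum_add_distrib]
    refine Finset.sum_eq_zero fun k _ => ?_
    rw [hu2 1 1 k k _ _ (ecast k) (ecast k), hu2 Complex.I Complex.I k k _ _ (enat k) (enat k)]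
    simp [Complex.mul_re, Complex.mul_im, Complex.I_re, Complex.I_im]
  have hlapv : lap (fun x => (h (emb x)).im) w = 0 := by
    show (∑ i, pd (pd (fun x => (h (emb x)).im) i) i w) = 0
    rw [Fin.sum_univ_add, ← Finset.sum_add_distrib]
    refine Finset.sum_eq_zero fun k _ => ?_
    rw [hv2 1 1 k k _ _ (ecast k) (ecast k), hv2 Complex.I Complex.I k k _ _ (enat k) (enat k)]
    simp [Complex.mul_re, Complex.mul_im, Complex.I_re, Complex.I_im]
  -- the ∞-Laplacians
  have hTz := hT (emb w) hw
  have hinfu : infLap (fun x => (h (emb x)).re) w = μ (emb w) * (h (emb w)).re := by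
    have key : infLap (fun x => (h (emb x)).re) w
        = ∑ k : Fin m, ∑ l : Fin m,
          ((starRingEnd ℂ) (cpd (cpd h l) k (emb w)) * cpd h k (emb w) * cpd h l (emb w)).re := by
      show (∑ i, ∑ j, pd (fun x => (h (emb x)).re) i w * pd (fun x => (h (emb x)).re) j w *
          pd (pd (fun x => (h (emb x)).re) j) i w) = _
      simp only [Fin.sum_univ_add]
      simp only [hu1 w hwU 1 _ _ (ecast _), hu1 w hwU Complex.I _ _ (enat _),
        hu2 1 1 _ _ _ _ (ecast _) (ecast _), hu2 1 Complex.I _ _ _ _ (ecast _) (enat _),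
        hu2 Complex.I 1 _ _ _ _ (enat _) (ecast _),
        hu2 Complex.I Complex.I _ _ _ _ (enat _) (enat _)]
      simp only [← Finset.sum_add_distrib]
      refine Finset.sum_congr rfl fun k _ => Finset.sum_congr rfl fun l _ => ?_
      simp [Complex.mul_re, Complex.mul_im, Complex.I_re, Complex.I_im, Complex.conj_re,
        Complex.conj_im]
      ring
    rw [key]
    rw [show (∑ k : Fin m, ∑ l : Fin m,
        ((starRingEnd ℂ) (cpd (cpd h l) k (emb w)) * cpd h k (emb w) * cpd h l (emb w)).re)
      = (∑ k : Fin m, ∑ l : Fin m,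
        (starRingEnd ℂ) (cpd (cpd h l) k (emb w)) * cpd h k (emb w) * cpd h l (emb w)).re by
      simp [Complex.re_sum]]
    rw [hTz]
    simp [Complex.mul_re]
  have hinfv : infLap (fun x => (h (emb x)).im) w = μ (emb w) * (h (emb w)).im := by
    have key : infLap (fun x => (h (emb x)).im) w
        = ∑ k : Fin m, ∑ l : Fin m,
          ((starRingEnd ℂ) (cpd (cpd h l) k (emb w)) * cpd h k (emb w) * cpd h l (emb w)).im := by
      show (∑ i, ∑ j, pd (fun x => (h (emb x)).im) i w * pd (fun x => (h (emb x)).im) j w *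
          pd (pd (fun x => (h (emb x)).im) j) i w) = _
      simp only [Fin.sum_univ_add]
      simp only [hv1 w hwU 1 _ _ (ecast _), hv1 w hwU Complex.I _ _ (enat _),
        hv2 1 1 _ _ _ _ (ecast _) (ecast _), hv2 1 Complex.I _ _ _ _ (ecast _) (enat _),
        hv2 Complex.I 1 _ _ _ _ (enat _) (ecast _),
        hv2 Complex.I Complex.I _ _ _ _ (enat _) (enat _)]
      simp only [← Finset.sum_add_distrib]
      refine Finset.sum_congr rfl fun k _ => Finset.sum_congr rfl fun l _ => ?_
      simp [Complex.mul_re, Complex.mul_im, Complex.I_re, Complex.I_im, Complex.conj_re,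
        Complex.conj_im]
      ring
    rw [key]
    rw [show (∑ k : Fin m, ∑ l : Fin m,
        ((starRingEnd ℂ) (cpd (cpd h l) k (emb w)) * cpd h k (emb w) * cpd h l (emb w)).im)
      = (∑ k : Fin m, ∑ l : Fin m,
        (starRingEnd ℂ) (cpd (cpd h l) k (emb w)) * cpd h k (emb w) * cpd h l (emb w)).im by
      simp [Complex.im_sum]]
    rw [hTz]
    simp [Complex.mul_im]
  refine ⟨hlapu, hlapv, ?_, ?_⟩
  · show (∑ i, pd (fun x => (h (emb x)).re) i w ^ 2) * lap (fun x => (h (emb x)).re) w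
        - infLap (fun x => (h (emb x)).re) w = _
    rw [hlapu, hinfu]
    ring
  · show (∑ i, pd (fun x => (h (emb x)).im) i w ^ 2) * lap (fun x => (h (emb x)).im) w
        - infLap (fun x => (h (emb x)).im) w = _
    rw [hlapv, hinfv]
    ring

end
end

section
/- Let h be a holomorphic function on an open set Ω ⊆ ℂ^m belonging to the class 𝒯^m with h(z) ≠ 0 for all z ∈ Ω. Then for every c ∈ ℂ and every integer r, the function H(z) = c·h(z)^r belongs to the class 𝒯^m on Ω: there is a real-valued function μ₁ on Ω with Σ_{i,j=1}^m conj(H_{z_iz_j})·H_{z_i}·H_{z_j} = μ₁·H on Ω. -/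
open Complex


noncomputable section

lemma hasFDerivAt_czpow {m : ℕ} (h : (Fin m → ℂ) → ℂ) (z : Fin m → ℂ)
    (hd : DifferentiableAt ℂ h z) (ha : h z ≠ 0) (c : ℂ) (r : ℤ) :
    HasFDerivAt (fun w => c * h w ^ r) ((c * (r * h z ^ (r-1))) • fderiv ℂ h z) z := by
  have h1 := (hasDerivAt_zpow r (h z) (Or.inl ha)).comp_hasFDerivAt z hd.hasFDerivAt
  have h2 := h1.const_mul c
  simpa [Function.comp, smul_smul] using h2

lemma cpd_czpow {m : ℕ} (h : (Fin m → ℂ) → ℂ) (z : Fin m → ℂ)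
    (hd : DifferentiableAt ℂ h z) (ha : h z ≠ 0) (c : ℂ) (r : ℤ) (i : Fin m) :
    cpd (fun w => c * h w ^ r) i z = c * r * h z ^ (r-1) * cpd h i z := by
  rw [cpd, (hasFDerivAt_czpow h z hd ha c r).fderiv]
  simp [cpd, mul_assoc]

lemma cpd2_czpow {m : ℕ} (h g : (Fin m → ℂ) → ℂ) (z : Fin m → ℂ)
    (hd : DifferentiableAt ℂ h z) (ha : h z ≠ 0) (hg : DifferentiableAt ℂ g z)
    (c : ℂ) (r : ℤ) (i : Fin m) :
    cpd (fun w => c * ↑r * h w ^ (r-1) * g w) i z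
      = c * ↑r * (((r:ℂ) - 1) * h z ^ (r-2) * cpd h i z * g z
          + h z ^ (r-1) * cpd g i z) := by
  have h1 := (hasFDerivAt_czpow h z hd ha (c * (r:ℂ)) (r-1)).mul hg.hasFDerivAt
  have e : (r:ℤ) - 1 - 1 = r - 2 := by ring
  rw [e] at h1
  rw [cpd, (show HasFDerivAt (fun w => c * ↑r * h w ^ (r-1) * g w) _ z from h1).fderiv]
  simp [cpd]
  ring

lemma sumid {m : ℕ} (K1 K2 : ℂ) (X : Fin m → Fin m → ℂ) (Y W : Fin m → ℂ) :
    ∑ i, ∑ j, (K1 * X i j + K2 * (Y i * W j))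
      = K1 * (∑ i, ∑ j, X i j) + K2 * ((∑ i, Y i) * (∑ j, W j)) := by
  simp only [Finset.sum_add_distrib, ← Finset.mul_sum, Finset.sum_mul_sum]


/-- If `h ∈ 𝒯^m` is nonvanishing on an open `Ω ⊆ ℂ^m`, then for every `c ∈ ℂ` and
every integer `r`, the function `H = c·h^r` belongs to `𝒯^m` on `Ω`. -/
theorem class_T_smul_zpow {m : ℕ} (Ω : Set (Fin m → ℂ)) (hΩ : IsOpen Ω)
    (h : (Fin m → ℂ) → ℂ) (hh : DifferentiableOn ℂ h Ω)
    (hne : ∀ z ∈ Ω, h z ≠ 0)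
    (μ : (Fin m → ℂ) → ℝ)
    (hT : ∀ z ∈ Ω, ∑ i, ∑ j,
        (starRingEnd ℂ) (cpd (cpd h j) i z) * cpd h i z * cpd h j z = (μ z : ℂ) * h z)
    (c : ℂ) (r : ℤ) :
    ∃ μ₁ : (Fin m → ℂ) → ℝ, ∀ z ∈ Ω,
      ∑ i, ∑ j,
          (starRingEnd ℂ) (cpd (cpd (fun w => c * h w ^ r) j) i z) *
            cpd (fun w => c * h w ^ r) i z * cpd (fun w => c * h w ^ r) j z
        = (μ₁ z : ℂ) * (c * h z ^ r) := by
  classical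
  have key : ∀ z ∈ Ω, ∃ t : ℝ,
      ∑ i, ∑ j,
          (starRingEnd ℂ) (cpd (cpd (fun w => c * h w ^ r) j) i z) *
            cpd (fun w => c * h w ^ r) i z * cpd (fun w => c * h w ^ r) j z
        = (t : ℂ) * (c * h z ^ r) := by
    intro z hz
    by_cases hc : c = 0
    · refine ⟨0, ?_⟩
      have h0 : ∀ i : Fin m, cpd (fun w => c * h w ^ r) i z = 0 := by
        intro i; simp [cpd, hc]
      simp only [Complex.ofReal_zero, zero_mul]
      refine Finset.sum_eq_zero fun i _ => Finset.sum_eq_zero fun j _ => ?_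
      rw [h0 i]; ring
    by_cases hr : r = 0
    · refine ⟨0, ?_⟩
      have h0 : ∀ i : Fin m, cpd (fun w => c * h w ^ r) i z = 0 := by
        intro i; simp [cpd, hr]
      simp only [Complex.ofReal_zero, zero_mul]
      refine Finset.sum_eq_zero fun i _ => Finset.sum_eq_zero fun j _ => ?_
      rw [h0 i]; ring
    -- main case
    have nh : Ω ∈ nhds z := hΩ.mem_nhds hz
    have hdz : DifferentiableAt ℂ h z := hh.differentiableAt nh
    have haz : h z ≠ 0 := hne z hz
    have A1 : ∀ i, cpd (fun w => c * h w ^ r) i z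
        = c * r * h z ^ (r-1) * cpd h i z := fun i => cpd_czpow h z hdz haz c r i
    have EJ : ∀ j, (cpd (fun w => c * h w ^ r) j) =ᶠ[nhds z]
        (fun w => c * ↑r * h w ^ (r-1) * cpd h j w) :=
      fun j => Filter.eventuallyEq_of_mem nh fun w hw =>
        cpd_czpow h w (hh.differentiableAt (hΩ.mem_nhds hw)) (hne w hw) c r j
    -- good j
    have A2 : ∀ j, DifferentiableAt ℂ (cpd h j) z → ∀ i,
        cpd (cpd (fun w => c * h w ^ r) j) i z
          = c * ↑r * (((r:ℂ) - 1) * h z ^ (r-2) * cpd h i z * cpd h j z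
              + h z ^ (r-1) * cpd (cpd h j) i z) := by
      intro j hgj i
      have : cpd (cpd (fun w => c * h w ^ r) j) i z
          = cpd (fun w => c * ↑r * h w ^ (r-1) * cpd h j w) i z := by
        show fderiv ℂ (cpd (fun w => c * h w ^ r) j) z (Pi.single i 1) = _
        rw [(EJ j).fderiv_eq]
        rfl
      rw [this, cpd2_czpow h (cpd h j) z hdz haz hgj c r i]
    -- bad j
    have A3 : ∀ j, ¬ DifferentiableAt ℂ (cpd h j) z → ∀ i,
        cpd (cpd (fun w => c * h w ^ r) j) i z = 0 ∧ cpd (cpd h j) i z = 0 := by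
      intro j hgj i
      constructor
      · have hnd : ¬ DifferentiableAt ℂ (cpd (fun w => c * h w ^ r) j) z := by
          intro hcontra
        -- then cpd h j would be differentiable
          apply hgj
          have E2 : (cpd h j) =ᶠ[nhds z]
              (fun w => (c * ↑r)⁻¹ * h w ^ (1-r) * cpd (fun w => c * h w ^ r) j w) := by
            refine Filter.eventuallyEq_of_mem nh fun w hw => ?_
            have hcr : c * (r:ℂ) ≠ 0 := by
              simp [hc, hr]
            rw [cpd_czpow h w (hh.differentiableAt (hΩ.mem_nhds hw)) (hne w hw) c r j]
            have hzp : h w ^ ((1:ℤ)-r) * h w ^ (r-1) = 1 := by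
              rw [← zpow_add₀ (hne w hw)]
              norm_num
            have e : (c * ↑r)⁻¹ * h w ^ ((1:ℤ)-r) * (c * ↑r * h w ^ (r-1) * cpd h j w)
                = ((c * ↑r)⁻¹ * (c * ↑r)) * ((h w ^ ((1:ℤ)-r) * h w ^ (r-1)) * cpd h j w) := by
              ring
            rw [e, hzp, inv_mul_cancel₀ hcr]
            ring
          rw [E2.differentiableAt_iff]
          exact ((hasFDerivAt_czpow h z hdz haz ((c * (r:ℂ))⁻¹) (1-r)).differentiableAt).mul hcontra
        show fderiv ℂ (cpd (fun w => c * h w ^ r) j) z (Pi.single i 1) = 0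
        rw [fderiv_zero_of_not_differentiableAt hnd]
        rfl
      · show fderiv ℂ (cpd h j) z (Pi.single i 1) = 0
        rw [fderiv_zero_of_not_differentiableAt hgj]
        rfl
    -- abbreviations
    set a := h z with ha_def
    set S : ℝ := ∑ i, Complex.normSq (cpd h i z) with hS_def
    set ST : ℝ := ∑ j, (if DifferentiableAt ℂ (cpd h j) z then Complex.normSq (cpd h j z) else 0) with hST_def
    refine ⟨Complex.normSq c * (r:ℝ)^3 *
      (Complex.normSq (a ^ (r-1)) * μ z + ((r:ℝ) - 1) * Complex.normSq (a ^ (r-2)) * (S * ST)), ?_⟩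
    have step : ∀ i j,
        (starRingEnd ℂ) (cpd (cpd (fun w => c * h w ^ r) j) i z) *
            cpd (fun w => c * h w ^ r) i z * cpd (fun w => c * h w ^ r) j z
        = ((starRingEnd ℂ) c * c * c * (r:ℂ)^3 * (a^(r-1)) * (a^(r-1)) * (starRingEnd ℂ) (a^(r-1)))
            * ((starRingEnd ℂ) (cpd (cpd h j) i z) * cpd h i z * cpd h j z)
          + ((starRingEnd ℂ) c * c * c * (r:ℂ)^3 * ((r:ℂ)-1) * (a^(r-1)) * (a^(r-1)) * (starRingEnd ℂ) (a^(r-2)))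
            * (((starRingEnd ℂ) (cpd h i z) * cpd h i z) *
                (((starRingEnd ℂ) (cpd h j z) * cpd h j z) *
                  (if DifferentiableAt ℂ (cpd h j) z then (1:ℂ) else 0))) := by
      intro i j
      by_cases hgj : DifferentiableAt ℂ (cpd h j) z
      · rw [A1 i, A1 j, A2 j hgj i, if_pos hgj]
        simp only [map_mul, map_add, map_sub, map_one, map_intCast]
        ring
      · obtain ⟨e1, e2⟩ := A3 j hgj i
        rw [e1, e2, if_neg hgj]
        simp
    rw [Finset.sum_congr rfl fun i _ => Finset.sum_congr rfl fun j _ => step i j]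
    rw [sumid]
    rw [hT z hz]
    have hY : (∑ i, (starRingEnd ℂ) (cpd h i z) * cpd h i z) = (S : ℂ) := by
      rw [hS_def]
      push_cast
      refine Finset.sum_congr rfl fun i _ => ?_
      rw [← Complex.mul_conj]; ring
    have hW : (∑ j, ((starRingEnd ℂ) (cpd h j z) * cpd h j z) *
        (if DifferentiableAt ℂ (cpd h j) z then (1:ℂ) else 0)) = (ST : ℂ) := by
      rw [hST_def]
      push_cast
      refine Finset.sum_congr rfl fun j _ => ?_
      by_cases hgj : DifferentiableAt ℂ (cpd h j) z
      · rw [if_pos hgj, if_pos hgj, ← Complex.mul_conj]; ring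
      · rw [if_neg hgj, if_neg hgj]; simp
    rw [hY, hW]
    have hr1 : a ^ r = a ^ (r-1) * a := by
      have e : r = r - 1 + 1 := by ring
      rw [e, zpow_add_one₀ haz]; ring_nf
    have hr2 : a ^ (r-1) = a ^ (r-2) * a := by
      have e : r - 1 = r - 2 + 1 := by ring
      rw [e, zpow_add_one₀ haz]
    push_cast
    simp only [← Complex.mul_conj]
    rw [hr1, hr2]
    simp only [map_mul]
    ring
  refine ⟨fun z => if hz : z ∈ Ω then (key z hz).choose else 0, fun z hz => ?_⟩
  simp only [dif_pos hz]
  exact (key z hz).choose_spec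



end
end
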